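/- Let α = Pa²/σ² > 0, β = Qb²/σ² > 0, ξ = ((1 + α + β) − √((1 − α + β)² + 4α))/(2α), W = 2β(1 + α + β − √((1 − α + β)² + 4α)), and G(v) = (1+ρ)a²v² + 2√Q·a·b·v + Qb² − ρσ² − Pρa². Then W ≥ 0, the denominator 1 + α − β + √((1 − α + β)² + 4α) is positive, and G(√(Pξ)) ≥ 0 holds if and only if ρ ≤ ((1 + α + 3β) − √((1 − α + β)² + 4α) + 2√W)/(1 + α − β + √((1 − α + β)² + 4α)). -/
import Mathlib


/-- Condition (20) of the paper: `G(√(Pξ)) ≥ 0` iff `ρ` is below the stated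
threshold; also `W ≥ 0` and the denominator of the threshold is positive. -/
theorem stmt_17 (a b P Q σ2 ρ : ℝ) (ha : 0 < a) (hb : 0 < b) (hP : 0 < P)
    (hQ : 0 < Q) (hσ : 0 < σ2) (hρ : 0 < ρ)
    (α β ξ W : ℝ) (G : ℝ → ℝ)
    (hα : α = P * a ^ 2 / σ2) (hβ : β = Q * b ^ 2 / σ2)
    (hξ : ξ = ((1 + α + β) - Real.sqrt ((1 - α + β) ^ 2 + 4 * α)) / (2 * α))
    (hW : W = 2 * β * (1 + α + β - Real.sqrt ((1 - α + β) ^ 2 + 4 * α)))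
    (hG : ∀ v : ℝ, G v = (1 + ρ) * a ^ 2 * v ^ 2 + 2 * Real.sqrt Q * a * b * v +
      Q * b ^ 2 - ρ * σ2 - P * ρ * a ^ 2) :
    W ≥ 0 ∧
    0 < 1 + α - β + Real.sqrt ((1 - α + β) ^ 2 + 4 * α) ∧
    (G (Real.sqrt (P * ξ)) ≥ 0 ↔
      ρ ≤ ((1 + α + 3 * β) - Real.sqrt ((1 - α + β) ^ 2 + 4 * α) +
            2 * Real.sqrt W) /
          (1 + α - β + Real.sqrt ((1 - α + β) ^ 2 + 4 * α))) := by
  have hαpos : 0 < α := by rw [hα]; positivity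
  have hβpos : 0 < β := by rw [hβ]; positivity
  set s := Real.sqrt ((1 - α + β) ^ 2 + 4 * α) with hsdef
  have hs0 : 0 ≤ s := Real.sqrt_nonneg _
  have hs2 : s ^ 2 = (1 - α + β) ^ 2 + 4 * α := Real.sq_sqrt (by positivity)
  have hsle : s ≤ 1 + α + β := by nlinarith [hs2, hs0]
  have hden : 0 < 1 + α - β + s := by nlinarith [hs2, hs0]
  have hW0 : 0 ≤ W := by rw [hW]; nlinarith
  have hξ0 : 0 ≤ ξ := by
    rw [hξ]
    apply div_nonneg <;> linarith
  have hPξ : 0 ≤ P * ξ := mul_nonneg hP.le hξ0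
  have hv2 : Real.sqrt (P * ξ) ^ 2 = P * ξ := Real.sq_sqrt hPξ
  have ea : P * a ^ 2 = α * σ2 := by rw [hα]; field_simp
  have eb : Q * b ^ 2 = β * σ2 := by rw [hβ]; field_simp
  have eξ : 2 * α * ξ = 1 + α + β - s := by
    rw [hξ]; field_simp
  have hw0 : 0 ≤ Real.sqrt W := Real.sqrt_nonneg _
  have hkey : 2 * Real.sqrt Q * a * b * Real.sqrt (P * ξ) = σ2 * Real.sqrt W := by
    have hL : 0 ≤ 2 * Real.sqrt Q * a * b * Real.sqrt (P * ξ) := by positivity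
    have hR : 0 ≤ σ2 * Real.sqrt W := by positivity
    have h1 : (2 * Real.sqrt Q * a * b * Real.sqrt (P * ξ)) ^ 2
        = (σ2 * Real.sqrt W) ^ 2 := by
      have hq2 : Real.sqrt Q ^ 2 = Q := Real.sq_sqrt hQ.le
      have e2 : (2 * Real.sqrt Q * a * b * Real.sqrt (P * ξ)) ^ 2
          = 4 * Q * a ^ 2 * b ^ 2 * (P * ξ) := by
        linear_combination (4 * a ^ 2 * b ^ 2 * Real.sqrt (P * ξ) ^ 2) * hq2
          + (4 * a ^ 2 * b ^ 2 * Q) * hv2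
      have e3 : (σ2 * Real.sqrt W) ^ 2 = σ2 ^ 2 * W := by
        rw [mul_pow, Real.sq_sqrt hW0]
      rw [e2, e3, hW]
      -- 4*Q*a^2*b^2*(P*ξ) = σ2^2 * (2*β*(1+α+β-s))
      linear_combination (4 * Q * b ^ 2 * ξ) * ea + (4 * ξ * α * σ2) * eb
        + (2 * β * σ2 ^ 2) * eξ
    calc 2 * Real.sqrt Q * a * b * Real.sqrt (P * ξ)
        = Real.sqrt ((2 * Real.sqrt Q * a * b * Real.sqrt (P * ξ)) ^ 2) :=
          (Real.sqrt_sq hL).symm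
      _ = Real.sqrt ((σ2 * Real.sqrt W) ^ 2) := by rw [h1]
      _ = σ2 * Real.sqrt W := Real.sqrt_sq hR
  refine ⟨hW0, hden, ?_⟩
  rw [hG, hv2, hkey, ge_iff_le, le_div_iff₀ hden]
  have e1 : a ^ 2 * (P * ξ) = σ2 * (1 + α + β - s) / 2 := by
    linear_combination ξ * ea + (σ2 / 2) * eξ
  have eG : (1 + ρ) * a ^ 2 * (P * ξ) + σ2 * Real.sqrt W + Q * b ^ 2
      - ρ * σ2 - P * ρ * a ^ 2
      = σ2 * ((1 + ρ) * (1 + α + β - s) / 2 + Real.sqrt W + β - ρ * (1 + α)) := by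
    linear_combination (1 + ρ) * e1 + eb - ρ * ea
  constructor
  · intro h
    rw [eG] at h
    have hX : 0 ≤ (1 + ρ) * (1 + α + β - s) / 2 + Real.sqrt W + β - ρ * (1 + α) :=
      (mul_nonneg_iff_of_pos_left hσ).mp h
    linarith
  · intro h
    rw [eG]
    have hX : 0 ≤ (1 + ρ) * (1 + α + β - s) / 2 + Real.sqrt W + β - ρ * (1 + α) := by
      linarith
    positivity
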